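/- For fixed x ∈ ℝ, δ > 0, and ν + 2h < 0 with h < 0, the limit lim_{t→∞} ∫₀^∞ ((4y − 2x)/δ − 2h√t) · exp((2yx − 2y²)/δ) · exp((ν + 2h)√t y) dy = 2h/(ν + 2h). -/

import Mathlib

open MeasureTheory Filter Topology Real Set

lemma watson_aux_exp_integral {c : ℝ} (hc : c < 0) :
    (∫ u in Ioi (0:ℝ), exp (c * u)) = (-c)⁻¹ := by
  have hb : (0:ℝ) < -c := by linarith
  have h := integral_comp_mul_left_Ioi (fun x => exp (-x)) 0 hb
  simp only [mul_zero] at h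
  rw [integral_exp_neg_Ioi_zero] at h
  have heq : (∫ x in Ioi (0:ℝ), exp (c * x)) = ∫ x in Ioi (0:ℝ), exp (-(-c * x)) := by
    congr 1; ext x; ring_nf
  rw [heq, h, smul_eq_mul, mul_one]

lemma watson_aux_subst (x δ h c : ℝ) {s : ℝ} (hs : 0 < s) :
    (∫ y in Ioi (0:ℝ),
        ((4 * y - 2 * x) / δ - 2 * h * s) * exp ((2 * y * x - 2 * y ^ 2) / δ) *
          exp (c * s * y))
      = ∫ u in Ioi (0:ℝ),
          s⁻¹ * (((4 * (u / s) - 2 * x) / δ - 2 * h * s) *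
            exp ((2 * (u / s) * x - 2 * (u / s) ^ 2) / δ) * exp (c * u)) := by
  have key := integral_comp_mul_left_Ioi (fun u => ((4 * (u / s) - 2 * x) / δ - 2 * h * s) *
        exp ((2 * (u / s) * x - 2 * (u / s) ^ 2) / δ) * exp (c * u)) 0 hs
  have heq : (∫ y in Ioi (0:ℝ),
      ((4 * y - 2 * x) / δ - 2 * h * s) * exp ((2 * y * x - 2 * y ^ 2) / δ) *
        exp (c * s * y)) = ∫ y in Ioi (0:ℝ),
      (fun u => ((4 * (u / s) - 2 * x) / δ - 2 * h * s) *
        exp ((2 * (u / s) * x - 2 * (u / s) ^ 2) / δ) * exp (c * u)) (s * y) := by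
    refine setIntegral_congr_fun measurableSet_Ioi fun y _ => ?_
    simp only
    rw [mul_div_cancel_left₀ _ hs.ne']
    ring_nf
  simp only [mul_zero] at key
  rw [heq, key, smul_eq_mul, ← MeasureTheory.integral_const_mul]

set_option maxHeartbeats 1000000 in
theorem watson_limit (x δ ν h : ℝ) (hδ : 0 < δ) (hh : h < 0) (hνh : ν + 2 * h < 0) :
    Tendsto
      (fun t : ℝ =>
        ∫ y in Set.Ioi (0:ℝ),
          ((4 * y - 2 * x) / δ - 2 * h * sqrt t) * exp ((2 * y * x - 2 * y ^ 2) / δ) *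
            exp ((ν + 2 * h) * sqrt t * y))
      atTop (𝓝 (2 * h / (ν + 2 * h))) := by
  set c : ℝ := ν + 2 * h with hc
  have hc0 : c < 0 := hνh
  clear_value c
  set G : ℝ → ℝ → ℝ := fun s u =>
    s⁻¹ * (((4 * (u / s) - 2 * x) / δ - 2 * h * s) *
      exp ((2 * (u / s) * x - 2 * (u / s) ^ 2) / δ) * exp (c * u)) with hG
  have hmain : Tendsto (fun s : ℝ => ∫ u in Ioi (0:ℝ), G s u) atTop
      (𝓝 (∫ u in Ioi (0:ℝ), (-2 * h) * exp (c * u))) := by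
    set C : ℝ := 16 / (δ * (-c)) + (2 * |x| / δ + 2 * |h|) with hC
    clear_value C
    apply tendsto_integral_filter_of_dominated_convergence
        (bound := fun u => C * exp (c * u / 4))
    · -- measurability
      filter_upwards [eventually_ge_atTop (1:ℝ)] with s hs1
      apply Continuous.aestronglyMeasurable
      fun_prop
    · -- domination
      filter_upwards [eventually_ge_atTop (1:ℝ),
        eventually_ge_atTop (4 * |x| / (δ * (-c)))] with s hs1 hs2
      refine (ae_restrict_iff' measurableSet_Ioi).2 (ae_of_all _ fun u hu => ?_)
      have hu0 : (0:ℝ) < u := hu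
      have hs0 : (0:ℝ) < s := by linarith
      have hcpos : (0:ℝ) < -c := by linarith
      set r : ℝ := s⁻¹ with hr
      have hr0 : 0 < r := by positivity
      have hr1 : r ≤ 1 := by
        rw [hr]; exact inv_le_one_of_one_le₀ hs1
      -- rewrite G s u = P * E with P the prefactor
      have hGsu : G s u = ((4 * u * r ^ 2 - 2 * x * r) / δ - 2 * h) *
          (exp ((2 * (u / s) * x - 2 * (u / s) ^ 2) / δ) * exp (c * u)) := by
        rw [hG]
        simp only
        rw [hr]
        field_simp
      clear_value r
      rw [hGsu, Real.norm_eq_abs, abs_mul]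
      have hEpos : 0 ≤ exp ((2 * (u / s) * x - 2 * (u / s) ^ 2) / δ) * exp (c * u) := by
        positivity
      rw [abs_of_nonneg hEpos]
      -- bound prefactor
      have habs : |4 * u * r ^ 2 - 2 * x * r| ≤ 4 * u + 2 * |x| := by
        have hxle := le_abs_self x
        have hxge := neg_abs_le x
        rw [abs_le]
        constructor <;>
          nlinarith [mul_nonneg hu0.le (sq_nonneg r),
            mul_nonneg (by linarith : (0:ℝ) ≤ |x| + x) hr0.le,
            mul_nonneg (by linarith : (0:ℝ) ≤ |x| - x) hr0.le,
            mul_nonneg (abs_nonneg x) (by linarith : (0:ℝ) ≤ 1 - r),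
            mul_nonneg hu0.le (by nlinarith : (0:ℝ) ≤ 1 - r ^ 2)]
      have hP : |(4 * u * r ^ 2 - 2 * x * r) / δ - 2 * h| ≤ (4 * u + 2 * |x|) / δ + 2 * |h| := by
        calc |(4 * u * r ^ 2 - 2 * x * r) / δ - 2 * h|
            = |(4 * u * r ^ 2 - 2 * x * r) / δ + -(2 * h)| := by ring_nf
          _ ≤ |(4 * u * r ^ 2 - 2 * x * r) / δ| + |-(2 * h)| := abs_add_le _ _
          _ = |4 * u * r ^ 2 - 2 * x * r| / δ + 2 * |h| := by
              rw [abs_div, abs_of_pos hδ, abs_neg, abs_mul]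
              norm_num
          _ ≤ (4 * u + 2 * |x|) / δ + 2 * |h| := by gcongr
      -- bound exponential
      have hE : exp ((2 * (u / s) * x - 2 * (u / s) ^ 2) / δ) * exp (c * u)
          ≤ exp (c * u / 2) := by
        rw [← Real.exp_add, Real.exp_le_exp]
        have hus : 0 < u / s := by positivity
        have h1 : (2 * (u / s) * x - 2 * (u / s) ^ 2) / δ ≤ 2 * (u / s) * |x| / δ := by
          gcongr (?_ / δ)
          nlinarith [sq_nonneg (u / s), mul_le_mul_of_nonneg_left (le_abs_self x) hus.le]
        have hs2' : 4 * |x| ≤ s * (δ * (-c)) := by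
          rw [div_le_iff₀ (by positivity)] at hs2
          linarith
        have h2 : 2 * (u / s) * |x| / δ ≤ -c * u / 2 := by
          have hmul : u / s * (4 * |x|) ≤ u * (δ * -c) := by
            calc u / s * (4 * |x|) ≤ u / s * (s * (δ * -c)) :=
                  mul_le_mul_of_nonneg_left hs2' hus.le
              _ = u * (δ * -c) := by field_simp
          rw [div_le_div_iff₀ hδ (by norm_num : (0:ℝ) < 2)]
          nlinarith
        linarith
      calc |(4 * u * r ^ 2 - 2 * x * r) / δ - 2 * h| *
            (exp ((2 * (u / s) * x - 2 * (u / s) ^ 2) / δ) * exp (c * u))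
          ≤ ((4 * u + 2 * |x|) / δ + 2 * |h|) * exp (c * u / 2) := by
            apply mul_le_mul hP hE hEpos
            positivity
        _ ≤ C * exp (c * u / 4) := by
            have hq : exp (c * u / 2) = exp (c * u / 4) * exp (c * u / 4) := by
              rw [← Real.exp_add]; ring_nf
            have hones : exp (c * u / 4) ≤ 1 := by
              apply Real.exp_le_one_iff.2
              nlinarith
            have huexp : u * exp (c * u / 4) ≤ 4 / (-c) := by
              have hz : (-c / 4) * u ≤ exp (-c / 4 * u) := by
                nlinarith [Real.add_one_le_exp (-c / 4 * u)]
              have hxe : exp (-c / 4 * u) * exp (c * u / 4) = 1 := by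
                rw [← Real.exp_add, show -c / 4 * u + c * u / 4 = 0 by ring, Real.exp_zero]
              have hexppos : 0 < exp (c * u / 4) := Real.exp_pos _
              have hkey : (-c / 4) * u * exp (c * u / 4) ≤ 1 := by
                calc (-c / 4) * u * exp (c * u / 4)
                    ≤ exp (-c / 4 * u) * exp (c * u / 4) :=
                      mul_le_mul_of_nonneg_right hz hexppos.le
                  _ = 1 := hxe
              rw [le_div_iff₀ hcpos]
              nlinarith [hkey]
            rw [hq, ← mul_assoc]
            apply mul_le_mul_of_nonneg_right ?_ (Real.exp_pos _).le
            have e1 : (4 * u / δ) * exp (c * u / 4) ≤ 16 / (δ * (-c)) := by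
              have : (4 * u / δ) * exp (c * u / 4) = (4 / δ) * (u * exp (c * u / 4)) := by
                ring
              rw [this]
              calc (4 / δ) * (u * exp (c * u / 4)) ≤ (4 / δ) * (4 / (-c)) :=
                    mul_le_mul_of_nonneg_left huexp (by positivity)
                _ = 16 / (δ * (-c)) := by
                    field_simp; ring
            have e2 : (2 * |x| / δ + 2 * |h|) * exp (c * u / 4) ≤ 2 * |x| / δ + 2 * |h| := by
              nlinarith [abs_nonneg x, abs_nonneg h, Real.exp_pos (c * u / 4),
                div_nonneg (by positivity : (0:ℝ) ≤ 2 * |x|) hδ.le]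
            calc ((4 * u + 2 * |x|) / δ + 2 * |h|) * exp (c * u / 4)
                = (4 * u / δ) * exp (c * u / 4) + (2 * |x| / δ + 2 * |h|) * exp (c * u / 4) := by
                  ring
              _ ≤ 16 / (δ * (-c)) + (2 * |x| / δ + 2 * |h|) := add_le_add e1 e2
              _ = C := hC.symm
    · -- integrability of the bound
      have hb4 : (0:ℝ) < -c / 4 := by linarith
      have hint := (exp_neg_integrableOn_Ioi 0 hb4).const_mul C
      have heqf : (fun u : ℝ => C * exp (-(-c / 4) * u)) = fun u => C * exp (c * u / 4) := by
        funext u; congr 1; ring_nf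
      rw [← heqf]
      exact hint
    · -- pointwise convergence
      refine ae_of_all _ fun u => ?_
      have hφ : Continuous (fun r : ℝ =>
          ((4 * u * r ^ 2 - 2 * x * r) / δ - 2 * h) *
            exp ((2 * (u * r) * x - 2 * (u * r) ^ 2) / δ) * exp (c * u)) := by fun_prop
      have hlim : Tendsto (fun s : ℝ =>
          ((4 * u * s⁻¹ ^ 2 - 2 * x * s⁻¹) / δ - 2 * h) *
            exp ((2 * (u * s⁻¹) * x - 2 * (u * s⁻¹) ^ 2) / δ) * exp (c * u)) atTop
          (𝓝 ((-2 * h) * exp (c * u))) := by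
        have h0 := (hφ.tendsto 0).comp tendsto_inv_atTop_zero
        simp only [Function.comp_def] at h0
        convert h0 using 2
        simp
      apply hlim.congr'
      filter_upwards [eventually_ge_atTop (1:ℝ)] with s hs1
      have hs0 : (0:ℝ) < s := by linarith
      rw [hG]
      simp only
      rw [div_eq_mul_inv u s]
      field_simp
  -- assemble
  have hsqrt : Tendsto (fun t : ℝ => sqrt t) atTop atTop := by
    refine tendsto_atTop_atTop.2 fun b => ⟨(max b 0) ^ 2, fun t ht => ?_⟩
    have h1 : max b 0 ≤ sqrt t := by
      rw [← Real.sqrt_sq (le_max_right b 0)]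
      exact Real.sqrt_le_sqrt ht
    exact (le_max_left b 0).trans h1
  have hcomp := hmain.comp hsqrt
  have hval : (∫ u in Ioi (0:ℝ), (-2 * h) * exp (c * u)) = 2 * h / c := by
    rw [MeasureTheory.integral_const_mul, watson_aux_exp_integral hc0]
    field_simp
  rw [hval] at hcomp
  apply hcomp.congr'
  filter_upwards [eventually_ge_atTop (1:ℝ)] with t ht
  have hst : 0 < sqrt t := Real.sqrt_pos.2 (by linarith)
  exact (watson_aux_subst x δ h c hst).symm
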